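/- Suppose the colors of the colored graph are partitioned, i.e. for every pair of vertices i, j ∈ S either C(i) = C(j) or C(i) ∩ C(j) = ∅. Then the process law p of the colored edge reinforced random walk started at x0 is Markov exchangeable. -/

import Mathlib

/-!
STATEMENT 13: a colored edge reinforced random walk with partitioned colors is
Markov exchangeable.

-/

open scoped Classical

/-- A colored graph: directed edges `E ⊆ S × S`, a color for each edge, positive
edge weights `β` and positive color weights `α`. -/
structure ColoredGraph (S C : Type*) where
  E : Set (S × S)
  col : S × S → C
  β : S × S → ℝ
  α : C → ℝ
  β_pos : ∀ e ∈ E, 0 < β e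
  α_pos : ∀ c, 0 < α c

namespace ColoredGraph

variable {S C : Type*}

/-- `C(i)`: the set of colors of the edges starting at `i`. -/
def Ci (G : ColoredGraph S C) (i : S) : Set C :=
  {c | ∃ j, (i, j) ∈ G.E ∧ G.col (i, j) = c}

/-- `α_{C(i)}`: the total weight of the colors of the edges starting at `i`. -/
noncomputable def alphaCi (G : ColoredGraph S C) (i : S) : ℝ :=
  ∑' c : G.Ci i, G.α c

/-- `β_{i,E_c}`: the total weight of the edges of color `c` starting at `i`. -/
noncomputable def betaFrom (G : ColoredGraph S C) (i : S) (c : C) : ℝ :=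
  ∑' j : {j : S // (i, j) ∈ G.E ∧ G.col (i, j) = c}, G.β (i, (j : S))

/-- `T_{i,j}(z)`: the number of transitions from `i` to `j` in the string `z`. -/
noncomputable def transCount (G : ColoredGraph S C) (z : List S) (i j : S) : ℕ :=
  (z.zip z.tail).countP (fun q => decide (q = (i, j)))

/-- `T_{E_c}(z)`: the number of transitions of `z` along edges of color `c`. -/
noncomputable def tEdgeColor (G : ColoredGraph S C) (z : List S) (c : C) : ℕ :=
  (z.zip z.tail).countP (fun e => decide (e ∈ G.E ∧ G.col e = c))

/-- `T_{C(i)}(z)`: the number of transitions of `z` along edges whose color is in `C(i)`. -/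
noncomputable def tColorOf (G : ColoredGraph S C) (z : List S) (i : S) : ℕ :=
  (z.zip z.tail).countP (fun e => decide (e ∈ G.E ∧ G.col e ∈ G.Ci i))

/-- `T_{i,E_c}(z)`: the number of transitions of `z` from `i` along edges of color `c`. -/
noncomputable def tFromColor (G : ColoredGraph S C) (z : List S) (i : S) (c : C) : ℕ :=
  (z.zip z.tail).countP (fun e => decide (e.1 = i ∧ e ∈ G.E ∧ G.col e = c))

/-- One-step predictive probability of the colored edge reinforced random walk:
the past path is `z` (starting at `x0` and ending at the current state), the
next state is `y`. -/
noncomputable def step (G : ColoredGraph S C) (z : List S) (y : S) : ℝ :=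
  match z.getLast? with
  | none => 0
  | some i =>
    if (i, y) ∈ G.E then
      ((G.α (G.col (i, y)) + (G.tEdgeColor z (G.col (i, y)) : ℝ)) /
          (G.alphaCi i + (G.tColorOf z i : ℝ))) *
        ((G.β (i, y) + (G.transCount z i y : ℝ)) /
          (G.betaFrom i (G.col (i, y)) + (G.tFromColor z i (G.col (i, y)) : ℝ)))
    else 0

/-- The probability of appending the string `x` to the past path `z`. -/
noncomputable def lawFrom (G : ColoredGraph S C) : List S → List S → ℝ
  | _, [] => 1
  | z, y :: rest => G.step z y * G.lawFrom (z ++ [y]) rest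

/-- The process law of the colored edge reinforced random walk started at `x0`. -/
noncomputable def law (G : ColoredGraph S C) (x0 : S) (x : List S) : ℝ :=
  G.lawFrom [x0] x

/-- The term `α_{C(j)} + T_{C(j)}(x0, base, y_1, …, y_t)` where `j = y_t` is the
last element of the prefix of `y` of length `t ≥ 1`. -/
noncomputable def colorTerm (G : ColoredGraph S C) (x0 : S) (base y : List S) (t : ℕ) : ℝ :=
  G.alphaCi ((x0 :: (base ++ y.take t)).getLast (List.cons_ne_nil _ _)) +
    (G.tColorOf (x0 :: (base ++ y.take t))
      ((x0 :: (base ++ y.take t)).getLast (List.cons_ne_nil _ _)) : ℝ)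

end ColoredGraph

/-- Two finite strings are equivalent if they have the same first element and the
same transition counts between any two states. -/
def StringEquiv {S : Type*} (z z' : List S) : Prop :=
  z.head? = z'.head? ∧
    ∀ i j : S, (z.zip z.tail).countP (fun q => decide (q = (i, j))) =
      (z'.zip z'.tail).countP (fun q => decide (q = (i, j)))


/-! ### Auxiliary development -/

namespace CERW

variable {S C : Type*}

/-- The list of transitions of a string. -/
def tr {α : Type*} (l : List α) : List (α × α) := l.zip l.tail

lemma tr_cons_cons {α : Type*} (a b : α) (t : List α) :
    tr (a :: b :: t) = (a, b) :: tr (b :: t) := rfl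

lemma tr_append {α : Type*} :
    ∀ (l m : List α) (h : l ≠ []), tr (l ++ m) = tr l ++ tr (l.getLast h :: m)
  | [], _, h => absurd rfl h
  | [a], m, _ => by cases m <;> simp [tr]
  | a :: b :: t, m, _ => by
    have ih := tr_append (b :: t) m (by simp)
    simp only [List.cons_append] at ih ⊢
    rw [tr_cons_cons, tr_cons_cons, ih, List.getLast_cons (by simp : (b :: t) ≠ [])]
    rfl

/-- Occurrence count, defined via `countP` with classical `decide`. -/
noncomputable def cnt {α : Type*} (l : List α) (a : α) : ℕ :=
  l.countP (fun x => decide (x = a))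

lemma cnt_nil {α : Type*} (a : α) : cnt ([] : List α) a = 0 := rfl

lemma cnt_append {α : Type*} (l l' : List α) (a : α) :
    cnt (l ++ l') a = cnt l a + cnt l' a := List.countP_append

lemma cnt_singleton {α : Type*} (a b : α) :
    cnt [a] b = if b = a then 1 else 0 := by
  simp only [cnt, List.countP_cons, List.countP_nil, Nat.zero_add]
  by_cases h : a = b
  · subst h; simp
  · simp [h, Ne.symm h]

lemma cnt_map {α Λ : Type*} (L : α → Λ) (p : List α) (a : Λ) :
    cnt (p.map L) a = p.countP (fun e => decide (L e = a)) := by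
  rw [cnt, List.countP_map]
  rfl

lemma cnt_cons {α : Type*} (a b : α) (l : List α) :
    cnt (a :: l) b = cnt l b + if a = b then 1 else 0 := by
  simp only [cnt, List.countP_cons]
  by_cases h : a = b <;> simp [h]

lemma perm_of_cnt {α : Type*} : ∀ (l l' : List α), (∀ a, cnt l a = cnt l' a) → l.Perm l'
  | [], l', h => by
    cases l' with
    | nil => exact List.Perm.refl _
    | cons b t =>
      exfalso
      have hb := h b
      rw [cnt_nil, cnt_cons, if_pos rfl] at hb
      omega
  | a :: t, l', h => by
    have hpos : 0 < cnt l' a := by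
      have ha := h a
      rw [cnt_cons, if_pos rfl] at ha
      omega
    obtain ⟨x, hx, hdx⟩ := List.countP_pos_iff.mp hpos
    have hxa : x = a := of_decide_eq_true hdx
    subst hxa
    obtain ⟨s, t', rfl⟩ := List.append_of_mem hx
    have ht : ∀ b, cnt t b = cnt (s ++ t') b := by
      intro b
      have hb := h b
      rw [cnt_cons, cnt_append, cnt_cons] at hb
      rw [cnt_append]
      split at hb <;> omega
    exact ((perm_of_cnt t (s ++ t') ht).cons _).trans List.perm_middle.symm

lemma Perm.cnt_eq {α : Type*} {l l' : List α} (h : l.Perm l') (a : α) :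
    cnt l a = cnt l' a := h.countP_eq _

/-- Sequential product with reinforcement: each factor is the weight of the
current label, where the weight of a label increases by 1 each time it occurs. -/
noncomputable def Q {Λ : Type*} : (Λ → ℝ) → List Λ → ℝ
  | _, [] => 1
  | w, a :: l => w a * Q (fun b => w b + if b = a then 1 else 0) l

lemma Q_perm {Λ : Type*} {l l' : List Λ} (h : l.Perm l') :
    ∀ w : Λ → ℝ, Q w l = Q w l' := by
  induction h with
  | nil => intro w; rfl
  | cons a _ ih => intro w; simp only [Q, ih]
  | swap a b l =>
    intro w
    have hw : (fun c => (w c + if c = b then 1 else 0) + if c = a then 1 else 0)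
        = (fun c => (w c + if c = a then 1 else 0) + if c = b then 1 else 0) := by
      funext c; ring
    simp only [Q]
    rw [hw]
    by_cases h : a = b
    · subst h; ring
    · rw [if_neg h, if_neg (Ne.symm h)]; ring
  | trans _ _ ih1 ih2 => intro w; rw [ih1 w, ih2 w]

/-- Weight function after a history of labels. -/
noncomputable def Wt {Λ : Type*} (w : Λ → ℝ) (p : List Λ) : Λ → ℝ :=
  fun a => w a + (cnt p a : ℝ)

lemma Wt_append {Λ : Type*} (w : Λ → ℝ) (p : List Λ) (a : Λ) :
    Wt w (p ++ [a]) = fun b => Wt w p b + if b = a then 1 else 0 := by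
  funext b
  simp only [Wt, cnt_append, cnt_singleton, Nat.cast_add,
    apply_ite (Nat.cast : ℕ → ℝ), Nat.cast_one, Nat.cast_zero]
  ring

lemma transCount_eq (G : ColoredGraph S C) (z : List S) (i j : S) :
    G.transCount z i j = cnt (tr z) (i, j) := by
  refine List.countP_congr ?_
  intro a _
  simp only [decide_eq_true_eq]

lemma tEdgeColor_eq (G : ColoredGraph S C) (z : List S)
    (he : ∀ e ∈ tr z, e ∈ G.E) (c : C) :
    G.tEdgeColor z c = cnt ((tr z).map G.col) c := by
  rw [cnt_map]
  refine List.countP_congr ?_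
  intro e hme
  simp only [decide_eq_true_eq]
  exact ⟨fun h => h.2, fun h => ⟨he e hme, h⟩⟩

lemma tFromColor_eq (G : ColoredGraph S C) (z : List S)
    (he : ∀ e ∈ tr z, e ∈ G.E) (i : S) (c : C) :
    G.tFromColor z i c = cnt ((tr z).map (fun e => (e.1, G.col e))) (i, c) := by
  rw [cnt_map]
  refine List.countP_congr ?_
  intro e hme
  simp only [decide_eq_true_eq, Prod.mk.injEq]
  exact ⟨fun h => ⟨h.1, h.2.2⟩, fun h => ⟨h.1, he e hme, h.2⟩⟩

lemma col_mem_Ci (G : ColoredGraph S C) {e : S × S} (he : e ∈ G.E) :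
    G.col e ∈ G.Ci e.1 := ⟨e.2, by rwa [Prod.mk.eta], by rw [Prod.mk.eta]⟩

lemma tColorOf_eq (G : ColoredGraph S C)
    (hpart : ∀ i j : S, G.Ci i = G.Ci j ∨ G.Ci i ∩ G.Ci j = ∅)
    (z : List S) (he : ∀ e ∈ tr z, e ∈ G.E) (i : S) :
    G.tColorOf z i = cnt ((tr z).map (fun e => G.Ci e.1)) (G.Ci i) := by
  rw [cnt_map]
  refine List.countP_congr ?_
  intro e hme
  have heE := he e hme
  have hmem : G.col e ∈ G.Ci e.1 := col_mem_Ci G heE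
  simp only [decide_eq_true_eq]
  constructor
  · rintro ⟨-, hc⟩
    rcases hpart e.1 i with h | h
    · exact h
    · exact absurd ⟨hmem, hc⟩ (Set.eq_empty_iff_forall_notMem.mp h (G.col e))
  · intro h
    exact ⟨heE, h ▸ hmem⟩

lemma step_eq (G : ColoredGraph S C) {z : List S} (hz : z ≠ []) (y : S) :
    G.step z y =
      (if (z.getLast hz, y) ∈ G.E then
        ((G.α (G.col (z.getLast hz, y)) + (G.tEdgeColor z (G.col (z.getLast hz, y)) : ℝ)) /
            (G.alphaCi (z.getLast hz) + (G.tColorOf z (z.getLast hz) : ℝ))) *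
          ((G.β (z.getLast hz, y) + (G.transCount z (z.getLast hz) y : ℝ)) /
            (G.betaFrom (z.getLast hz) (G.col (z.getLast hz, y)) +
              (G.tFromColor z (z.getLast hz) (G.col (z.getLast hz, y)) : ℝ)))
      else 0) := by
  unfold ColoredGraph.step
  rw [List.getLast?_eq_getLast hz]

/-- Total color weight of a set of colors. -/
noncomputable def wSet (G : ColoredGraph S C) : Set C → ℝ := fun A => ∑' c : A, G.α c

/-- `betaFrom` as a function of a pair. -/
noncomputable def wSrc (G : ColoredGraph S C) : S × C → ℝ := fun q => G.betaFrom q.1 q.2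

lemma lawFrom_zero (G : ColoredGraph S C) :
    ∀ (x z : List S) (hz : z ≠ []),
      (∃ e ∈ tr (z.getLast hz :: x), e ∉ G.E) → G.lawFrom z x = 0 := by
  intro x
  induction x with
  | nil =>
    rintro z hz ⟨e, hme, -⟩
    simp [tr] at hme
  | cons y rest ih =>
    rintro z hz ⟨e, hme, heE⟩
    have hstep : G.lawFrom z (y :: rest) = G.step z y * G.lawFrom (z ++ [y]) rest := rfl
    rw [hstep]
    rw [tr_cons_cons] at hme
    rcases List.mem_cons.mp hme with h | h
    · subst h
      rw [step_eq G hz y, if_neg heE, zero_mul]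
    · have hz' : z ++ [y] ≠ [] := by simp
      have hlast : (z ++ [y]).getLast hz' = y := by simp
      rw [ih (z ++ [y]) hz' ⟨e, by rw [hlast]; exact h, heE⟩, mul_zero]

lemma lawFrom_eq (G : ColoredGraph S C)
    (hpart : ∀ i j : S, G.Ci i = G.Ci j ∨ G.Ci i ∩ G.Ci j = ∅) :
    ∀ (x z : List S) (hz : z ≠ []),
      (∀ e ∈ tr (z ++ x), e ∈ G.E) →
      G.lawFrom z x =
        (Q (Wt G.α ((tr z).map G.col)) ((tr (z.getLast hz :: x)).map G.col) /
            Q (Wt (wSet G) ((tr z).map (fun e => G.Ci e.1)))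
              ((tr (z.getLast hz :: x)).map (fun e => G.Ci e.1))) *
          (Q (Wt G.β (tr z)) (tr (z.getLast hz :: x)) /
            Q (Wt (wSrc G) ((tr z).map (fun e => (e.1, G.col e))))
              ((tr (z.getLast hz :: x)).map (fun e => (e.1, G.col e)))) := by
  intro x
  induction x with
  | nil =>
    intro z hz he
    show (1 : ℝ) = _
    simp [tr, Q]
  | cons y rest ih =>
    intro z hz he
    have htrz : tr (z ++ (y :: rest)) = tr z ++ tr (z.getLast hz :: y :: rest) :=
      tr_append z (y :: rest) hz
    have he' : ∀ e ∈ tr z, e ∈ G.E := by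
      intro e hme; exact he e (by rw [htrz]; exact List.mem_append_left _ hme)
    have hiy : (z.getLast hz, y) ∈ G.E := by
      refine he (z.getLast hz, y) ?_
      rw [htrz, tr_cons_cons]
      exact List.mem_append_right _ List.mem_cons_self
    have hstep : G.lawFrom z (y :: rest) = G.step z y * G.lawFrom (z ++ [y]) rest := rfl
    have hz' : z ++ [y] ≠ [] := by simp
    have hlast : (z ++ [y]).getLast hz' = y := by simp
    have htrz' : tr (z ++ [y]) = tr z ++ [(z.getLast hz, y)] := by
      rw [tr_append z [y] hz]; rfl
    have hassoc : (z ++ [y]) ++ rest = z ++ (y :: rest) := by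
      rw [List.append_assoc]; rfl
    have hih := ih (z ++ [y]) hz' (by rw [hassoc]; exact he)
    rw [hlast, htrz'] at hih
    simp only [List.map_append, List.map_cons, List.map_nil] at hih
    rw [Wt_append G.α ((tr z).map G.col) (G.col (z.getLast hz, y)),
      Wt_append (wSet G) ((tr z).map (fun e => G.Ci e.1)) (G.Ci (z.getLast hz)),
      Wt_append G.β (tr z) (z.getLast hz, y),
      Wt_append (wSrc G) ((tr z).map (fun e => (e.1, G.col e)))
        (z.getLast hz, G.col (z.getLast hz, y))] at hih
    rw [hstep, hih, step_eq G hz y, if_pos hiy,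
      tEdgeColor_eq G z he' (G.col (z.getLast hz, y)),
      tColorOf_eq G hpart z he' (z.getLast hz),
      transCount_eq G z (z.getLast hz) y,
      tFromColor_eq G z he' (z.getLast hz) (G.col (z.getLast hz, y))]
    rw [tr_cons_cons]
    simp only [List.map_cons, Q]
    have e1 : G.α (G.col (z.getLast hz, y)) +
        (cnt ((tr z).map G.col) (G.col (z.getLast hz, y)) : ℝ) =
        Wt G.α ((tr z).map G.col) (G.col (z.getLast hz, y)) := rfl
    have e2 : G.alphaCi (z.getLast hz) +
        (cnt ((tr z).map (fun e => G.Ci e.1)) (G.Ci (z.getLast hz)) : ℝ) =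
        Wt (wSet G) ((tr z).map (fun e => G.Ci e.1)) (G.Ci (z.getLast hz)) := rfl
    have e3 : G.β (z.getLast hz, y) + (cnt (tr z) (z.getLast hz, y) : ℝ) =
        Wt G.β (tr z) (z.getLast hz, y) := rfl
    have e4 : G.betaFrom (z.getLast hz) (G.col (z.getLast hz, y)) +
        (cnt ((tr z).map (fun e => (e.1, G.col e))) (z.getLast hz, G.col (z.getLast hz, y)) : ℝ) =
        Wt (wSrc G) ((tr z).map (fun e => (e.1, G.col e)))
          (z.getLast hz, G.col (z.getLast hz, y)) := rfl
    rw [e1, e2, e3, e4]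
    ring

end CERW

theorem cerw_partitioned_markovExchangeable {S C : Type*} [Countable S] [Countable C]
    (G : ColoredGraph S C) (x0 : S)
    (hsumα : ∀ i : S, Summable (fun c : G.Ci i => G.α c))
    (hsumβ : ∀ (i : S) (c : C),
      Summable (fun j : {j : S // (i, j) ∈ G.E ∧ G.col (i, j) = c} => G.β (i, (j : S))))
    (hpart : ∀ i j : S, G.Ci i = G.Ci j ∨ G.Ci i ∩ G.Ci j = ∅) :
    ∀ x x' : List S, StringEquiv (x0 :: x) (x0 :: x') → G.law x0 x = G.law x0 x' := by
  classical
  intro x x' hequiv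
  obtain ⟨-, hcnt⟩ := hequiv
  have hperm : (CERW.tr (x0 :: x)).Perm (CERW.tr (x0 :: x')) := by
    refine CERW.perm_of_cnt _ _ ?_
    rintro ⟨i, j⟩
    have e1 : CERW.cnt (CERW.tr (x0 :: x)) (i, j) =
        List.countP (fun q => decide (q = (i, j))) ((x0 :: x).zip (x0 :: x).tail) :=
      List.countP_congr (fun a _ => by simp only [decide_eq_true_eq])
    have e2 : CERW.cnt (CERW.tr (x0 :: x')) (i, j) =
        List.countP (fun q => decide (q = (i, j))) ((x0 :: x').zip (x0 :: x').tail) :=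
      List.countP_congr (fun a _ => by simp only [decide_eq_true_eq])
    rw [e1, e2]
    exact hcnt i j
  by_cases hE : ∀ e ∈ CERW.tr (x0 :: x), e ∈ G.E
  · have hE' : ∀ e ∈ CERW.tr (x0 :: x'), e ∈ G.E := fun e hme => hE e (hperm.mem_iff.mpr hme)
    have h1 := CERW.lawFrom_eq G hpart x [x0] (by simp)
      (by rw [List.singleton_append]; exact hE)
    have h2 := CERW.lawFrom_eq G hpart x' [x0] (by simp)
      (by rw [List.singleton_append]; exact hE')
    have hlast : ([x0] : List S).getLast (by simp) = x0 := rfl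
    rw [hlast] at h1 h2
    show G.lawFrom [x0] x = G.lawFrom [x0] x'
    rw [h1, h2,
      CERW.Q_perm (hperm.map G.col),
      CERW.Q_perm (hperm.map (fun e => G.Ci e.1)),
      CERW.Q_perm hperm,
      CERW.Q_perm (hperm.map (fun e => (e.1, G.col e)))]
  · push_neg at hE
    obtain ⟨e, hme, heE⟩ := hE
    have hz1 : G.law x0 x = 0 := CERW.lawFrom_zero G x [x0] (by simp) ⟨e, hme, heE⟩
    have hz2 : G.law x0 x' = 0 :=
      CERW.lawFrom_zero G x' [x0] (by simp) ⟨e, hperm.mem_iff.mp hme, heE⟩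
    rw [hz1, hz2]
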